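/- Let u and t be positive integers and let i ∈ {1, …, min(u,t) − 1}. Then the pair (C(t−1, i−1), C(t−1, i)) belongs to tra(u,t); that is, there exist antichains X and Y in DBV(u,t) with |X| = C(t−1, i−1) and |Y| = C(t−1, i) such that x ≰ y for every x ∈ X and y ∈ Y. (Witnesses: X is the set of vectors in DBV(u,t) with exactly i−1 zero entries and Y is the set of vectors in DBV(u,t) with exactly i zero entries.) -/

import Mathlib

/-- The *airiness* of a bit vector `x : Fin t → Bool`: the largest number `u` such that
`x` has `u` consecutive `false` (i.e. zero) entries. -/
noncomputable def air {t : ℕ} (x : Fin t → Bool) : ℕ :=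
  sSup {u : ℕ | ∃ j : ℕ, j + u ≤ t ∧ ∀ i : Fin t, j ≤ i.val → i.val < j + u → x i = false}

/-- `DBV u t`: the set of bit vectors of dimension `t` whose first coordinate is `1`
(`true`) and whose airiness is strictly less than `u`, ordered componentwise. -/
def DBV (u t : ℕ) : Set (Fin t → Bool) :=
  {x | (∀ i : Fin t, i.val = 0 → x i = true) ∧ air x < u}

/-- `tra u t`: the set of pairs `(|X|, |Y|)` where `X` and `Y` are antichains in
`DBV u t` such that `x ≰ y` for all `x ∈ X` and `y ∈ Y`. -/
def tra (u t : ℕ) : Set (ℕ × ℕ) :=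
  {p | ∃ X Y : Finset (Fin t → Bool),
    ↑X ⊆ DBV u t ∧ ↑Y ⊆ DBV u t ∧
    IsAntichain (· ≤ ·) (X : Set (Fin t → Bool)) ∧
    IsAntichain (· ≤ ·) (Y : Set (Fin t → Bool)) ∧
    (∀ x ∈ X, ∀ y ∈ Y, ¬ x ≤ y) ∧ p = (X.card, Y.card)}

open Finset


def falses {t : ℕ} (x : Fin t → Bool) : Finset (Fin t) :=
  univ.filter (fun j => x j = false)

lemma air_le_falses {t : ℕ} (x : Fin t → Bool) : air x ≤ (falses x).card := by
  refine csSup_le ⟨0, 0, by omega, fun i _ h => absurd h (by omega)⟩ ?_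
  rintro v ⟨j, hjv, h⟩
  calc v = (univ : Finset (Fin v)).card := by simp
    _ ≤ (falses x).card := by
        apply Finset.card_le_card_of_injOn (fun m => (⟨j + m.val, by omega⟩ : Fin t))
        · intro m _
          simp only [falses, mem_filter, mem_univ, true_and]
          exact Finset.mem_coe.mpr (Finset.mem_filter.mpr ⟨mem_univ _, h ⟨j + m.val, by omega⟩ (by simp only [Fin.val_mk]; omega) (by simp only [Fin.val_mk]; omega)⟩)
        · intro a _ b _ hab
          have : j + a.val = j + b.val := congrArg Fin.val hab
          exact Fin.ext (by omega)

lemma eq_of_falses_eq {t : ℕ} {x y : Fin t → Bool} (h : falses x = falses y) : x = y := by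
  funext j
  have := Finset.ext_iff.mp h j
  simp only [falses, mem_filter, mem_univ, true_and] at this
  cases hx : x j <;> cases hy : y j <;> simp_all

lemma falses_anti {t : ℕ} {x y : Fin t → Bool} (h : x ≤ y) : falses y ⊆ falses x := by
  intro j hj
  simp only [falses, mem_filter, mem_univ, true_and] at hj ⊢
  have := h j
  cases hx : x j
  · rfl
  · rw [hx, hj] at this; exact absurd this (by simp)

def Xset (t k : ℕ) : Finset (Fin t → Bool) :=
  univ.filter (fun x => (∀ j : Fin t, j.val = 0 → x j = true) ∧ (falses x).card = k)

lemma Xset_card (t k : ℕ) (ht : 0 < t) : (Xset t k).card = Nat.choose (t - 1) k := by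
  have h0 : ((univ.erase (⟨0, ht⟩ : Fin t)).powersetCard k).card = Nat.choose (t-1) k := by
    rw [Finset.card_powersetCard, Finset.card_erase_of_mem (mem_univ _), Finset.card_univ,
      Fintype.card_fin]
  rw [← h0]
  apply Finset.card_bij (fun x _ => falses x)
  · intro x hx
    simp only [Xset, mem_filter, mem_univ, true_and] at hx
    rw [Finset.mem_powersetCard]
    refine ⟨fun j hj => ?_, hx.2⟩
    simp only [falses, mem_filter, mem_univ, true_and] at hj
    rw [Finset.mem_erase]
    refine ⟨fun hje => ?_, mem_univ _⟩
    rw [hje] at hj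
    rw [hx.1 _ rfl] at hj
    exact absurd hj (by simp)
  · intro a ha b hb hab
    exact eq_of_falses_eq hab
  · intro S hS
    rw [Finset.mem_powersetCard] at hS
    refine ⟨fun j => !(decide (j ∈ S)), ?_, ?_⟩
    · simp only [Xset, mem_filter, mem_univ, true_and]
      constructor
      · intro j hj
        have hje : j = ⟨0, ht⟩ := Fin.ext hj
        have hjS : j ∉ S := fun hc => (Finset.mem_erase.mp (hS.1 hc)).1 hje
        simp [hjS]
      · have : falses (fun j => !(decide (j ∈ S))) = S := by
          ext j; simp [falses]
        rw [this, hS.2]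
    · ext j; simp [falses]


lemma Xset_subset_DBV (u t k : ℕ) (hk : k < u) : ↑(Xset t k) ⊆ DBV u t := by
  intro x hx
  simp only [Finset.mem_coe, Xset, mem_filter, mem_univ, true_and] at hx
  exact ⟨hx.1, lt_of_le_of_lt (by rw [← hx.2]; exact air_le_falses x) hk⟩

lemma Xset_antichain (t k : ℕ) :
    IsAntichain (· ≤ ·) ((Xset t k : Finset (Fin t → Bool)) : Set (Fin t → Bool)) := by
  intro x hx y hy hne hle
  simp only [Finset.mem_coe, Xset, mem_filter, mem_univ, true_and] at hx hy
  exact hne (eq_of_falses_eq (Finset.eq_of_subset_of_card_le (falses_anti hle)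
    (by rw [hx.2, hy.2])).symm)


/-- For positive integers `u` and `t` and any `i` with `1 ≤ i ≤ min u t - 1`, the pair
`(C(t-1, i-1), C(t-1, i))` belongs to `tra u t`: there are antichains `X` and `Y` in
`DBV u t` of these sizes with `x ≰ y` for every `x ∈ X` and `y ∈ Y`. -/
theorem choose_pair_mem_tra (u t : ℕ) (hu : 0 < u) (ht : 0 < t)
    (i : ℕ) (hi1 : 1 ≤ i) (hi2 : i ≤ min u t - 1) :
    (Nat.choose (t - 1) (i - 1), Nat.choose (t - 1) i) ∈ tra u t := by
  have hiu : i < u := by omega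
  refine ⟨Xset t (i-1), Xset t i, Xset_subset_DBV u t (i-1) (by omega),
    Xset_subset_DBV u t i hiu, Xset_antichain t (i-1), Xset_antichain t i, ?_, ?_⟩
  · intro x hx y hy hle
    simp only [Xset, mem_filter, mem_univ, true_and] at hx hy
    have := Finset.card_le_card (falses_anti hle)
    omega
  · rw [Xset_card t (i-1) ht, Xset_card t i ht]
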